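/- arXiv:2007.00427 — 2 statements merged into one kernel-verified Lean document; each statement's English description precedes it below -/
import Mathlib

section
/- Let P, Q, R be symmetric positive definite matrices (of sizes n×n, n×n, m×m respectively), K ∈ ℝ^{m×n}, A ∈ ℝ^{n×n}, B ∈ ℝ^{n×m}, and suppose P ≥ (A+BK)ᵀP(A+BK) + Q + KᵀRK. Then for any β > 0 and any equilibrium point x_e satisfying x_e = (A+BK)x_e + Bd (i.e., (A+BK)x_e + Bd = x_e), the ellipsoid E(x_e, β) = {x : (x−x_e)ᵀP(x−x_e) ≤ β} is positively invariant under the dynamics x⁺ = Ax + B(Kx + d): if x ∈ E(x_e, β) then x⁺ ∈ E(x_e, β). -/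
open Matrix

lemma quad_shift {n k : ℕ} (M : Matrix (Fin k) (Fin n) ℝ) (v : Fin n → ℝ)
    (w : Fin k → ℝ) : (M.mulVec v) ⬝ᵥ w = v ⬝ᵥ Mᵀ.mulVec w := by
  rw [dotProduct_mulVec, vecMul_transpose]

theorem ellipsoid_positively_invariant {n m : ℕ}
    (A P Q : Matrix (Fin n) (Fin n) ℝ) (B : Matrix (Fin n) (Fin m) ℝ)
    (K : Matrix (Fin m) (Fin n) ℝ) (R : Matrix (Fin m) (Fin m) ℝ)
    (hP : P.PosDef) (hQ : Q.PosDef) (hR : R.PosDef)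
    (hLyap : (P - ((A + B * K)ᵀ * P * (A + B * K) + Q + Kᵀ * R * K)).PosSemidef)
    (β : ℝ) (hβ : 0 < β) (x_e : Fin n → ℝ) (d : Fin m → ℝ)
    (heq : (A + B * K).mulVec x_e + B.mulVec d = x_e)
    (x : Fin n → ℝ) (hx : (x - x_e) ⬝ᵥ P.mulVec (x - x_e) ≤ β) :
    ((A.mulVec x + B.mulVec (K.mulVec x + d)) - x_e) ⬝ᵥ
      P.mulVec ((A.mulVec x + B.mulVec (K.mulVec x + d)) - x_e) ≤ β := by
  set Acl := A + B * K with hAcl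
  set y := x - x_e with hy
  have hd : B.mulVec d = x_e - Acl.mulVec x_e := eq_sub_of_add_eq' heq
  have hvec : (A.mulVec x + B.mulVec (K.mulVec x + d)) - x_e = Acl.mulVec y := by
    simp only [mulVec_add, hd, hy, hAcl, mulVec_sub, add_mulVec, mulVec_mulVec]
    abel
  rw [hvec]
  have hquad : (Acl.mulVec y) ⬝ᵥ P.mulVec (Acl.mulVec y)
      = y ⬝ᵥ (Aclᵀ * P * Acl).mulVec y := by
    rw [mulVec_mulVec, quad_shift, mulVec_mulVec, Matrix.mul_assoc]
  have hL : 0 ≤ y ⬝ᵥ (P - (Aclᵀ * P * Acl + Q + Kᵀ * R * K)).mulVec y := by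
    have := hLyap.dotProduct_mulVec_nonneg y
    simpa using this
  have hQy : 0 ≤ y ⬝ᵥ Q.mulVec y := by
    have := hQ.posSemidef.dotProduct_mulVec_nonneg y
    simpa using this
  have hRy : 0 ≤ y ⬝ᵥ (Kᵀ * R * K).mulVec y := by
    have := hR.posSemidef.dotProduct_mulVec_nonneg (K.mulVec y)
    have h2 : (K.mulVec y) ⬝ᵥ R.mulVec (K.mulVec y)
        = y ⬝ᵥ (Kᵀ * R * K).mulVec y := by
      rw [mulVec_mulVec, quad_shift, mulVec_mulVec, Matrix.mul_assoc]
    simp only [star_trivial] at this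
    rwa [h2] at this
  rw [sub_mulVec, add_mulVec, add_mulVec, dotProduct_sub, dotProduct_add,
    dotProduct_add] at hL
  rw [hquad]
  linarith
end

section
/- Let P be symmetric positive definite on ℝⁿ and let M ∈ ℝ^{n×p}, v ∈ ℝⁿ, and ρⱼ ≥ 0, Pⱼ symmetric positive semidefinite matrices on ℝᵖ for j in a finite index set N, and α > 0. If the block matrix [[P⁻¹α^{1/2}, M, v],[Mᵀ, Σⱼ ρⱼPⱼ, 0],[vᵀ, 0, α^{1/2} − Σⱼρⱼ]] is positive semidefinite, then (Ms + v)ᵀP(Ms + v) ≤ α for every s ∈ ℝᵖ with sᵀPⱼs ≤ 1 for all j ∈ N. -/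
open Matrix

theorem terminal_invariance_lmi_implies_robust_constraint {n p r : ℕ}
    (P : Matrix (Fin n) (Fin n) ℝ) (hP : P.PosDef)
    (M : Matrix (Fin n) (Fin p) ℝ) (v : Fin n → ℝ)
    (Pm : Fin r → Matrix (Fin p) (Fin p) ℝ) (hPm : ∀ j, (Pm j).PosSemidef)
    (ρ : Fin r → ℝ) (hρ : ∀ j, 0 ≤ ρ j) (α : ℝ) (hα : 0 < α)
    (hLMI : (Matrix.fromBlocks (Real.sqrt α • P⁻¹)
        (Matrix.of fun i (j : Fin p ⊕ Fin 1) =>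
          Sum.elim (fun jp => M i jp) (fun _ => v i) j)
        (Matrix.of fun (j : Fin p ⊕ Fin 1) i =>
          Sum.elim (fun jp => M i jp) (fun _ => v i) j)
        (Matrix.fromBlocks (∑ j, ρ j • Pm j) 0 0
          (Matrix.of fun _ _ => Real.sqrt α - ∑ j, ρ j))).PosSemidef) :
    ∀ s : Fin p → ℝ, (∀ j, s ⬝ᵥ (Pm j).mulVec s ≤ 1) →
      (M.mulVec s + v) ⬝ᵥ P.mulVec (M.mulVec s + v) ≤ α := by
  intro s hs
  set sα := Real.sqrt α with hsα_def
  have hsα : 0 < sα := Real.sqrt_pos.mpr hα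
  set w : Fin n → ℝ := M.mulVec s + v with hw
  set t : ℝ := w ⬝ᵥ P.mulVec w with ht
  set u : Fin n → ℝ := (-(sα⁻¹)) • P.mulVec w with hu
  set y : Fin p ⊕ Fin 1 → ℝ := Sum.elim s (fun _ => 1) with hy
  set W : Matrix (Fin n) (Fin p ⊕ Fin 1) ℝ :=
    Matrix.of fun i (j : Fin p ⊕ Fin 1) =>
      Sum.elim (fun jp => M i jp) (fun _ => v i) j with hW
  set C : Matrix (Fin p ⊕ Fin 1) (Fin n) ℝ :=
    Matrix.of fun (j : Fin p ⊕ Fin 1) i =>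
      Sum.elim (fun jp => M i jp) (fun _ => v i) j with hC
  set D : Matrix (Fin p ⊕ Fin 1) (Fin p ⊕ Fin 1) ℝ :=
    Matrix.fromBlocks (∑ j, ρ j • Pm j) 0 0
      (Matrix.of fun _ _ => sα - ∑ j, ρ j) with hD
  have hPinv : P⁻¹.mulVec (P.mulVec w) = w := by
    rw [Matrix.mulVec_mulVec, Matrix.nonsing_inv_mul P
      (isUnit_iff_ne_zero.mpr hP.det_pos.ne'), Matrix.one_mulVec]
  -- W *ᵥ y = w
  have hWy : W *ᵥ y = w := by
    funext i
    show (Sum.elim (fun jp => M i jp) (fun _ => v i)) ⬝ᵥ (Sum.elim s fun _ => 1) = w i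
    rw [sumElim_dotProduct_sumElim]
    simp [hw, Matrix.mulVec, dotProduct]
  -- top block of B *ᵥ z vanishes
  have htop : (sα • P⁻¹) *ᵥ u + W *ᵥ y = 0 := by
    rw [hWy, hu, Matrix.mulVec_smul, Matrix.smul_mulVec, hPinv, smul_smul,
      show (-sα⁻¹ * sα : ℝ) = -1 by field_simp]
    funext i; simp
  -- y ᵥ* C = w
  have hyC : y ᵥ* C = w := by
    funext i
    show (Sum.elim s fun _ => 1) ⬝ᵥ (Sum.elim (fun jp => M i jp) (fun _ => v i)) = w i
    rw [sumElim_dotProduct_sumElim]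
    simp [hw, Matrix.mulVec, dotProduct, mul_comm]
  -- quadratic form inequality from PSD
  have hz := hLMI.dotProduct_mulVec_nonneg (Sum.elim u y)
  rw [show (star (Sum.elim u y) : Fin n ⊕ (Fin p ⊕ Fin 1) → ℝ) = Sum.elim u y from rfl,
    Matrix.fromBlocks_mulVec] at hz
  simp only [Sum.elim_comp_inl, Sum.elim_comp_inr] at hz
  rw [sumElim_dotProduct_sumElim, htop, dotProduct_zero,
    dotProduct_add, Matrix.dotProduct_mulVec y C u, hyC] at hz
  -- compute y ⬝ᵥ D *ᵥ y
  have hyD : y ⬝ᵥ D *ᵥ y = s ⬝ᵥ (∑ j, ρ j • Pm j) *ᵥ s + (sα - ∑ j, ρ j) := by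
    rw [hD, Matrix.fromBlocks_mulVec]
    simp only [hy, Sum.elim_comp_inl, Sum.elim_comp_inr, Matrix.zero_mulVec,
      add_zero, zero_add]
    rw [sumElim_dotProduct_sumElim]
    simp [Matrix.mulVec, dotProduct]
  rw [hyD] at hz
  -- w ⬝ᵥ u = -(sα⁻¹) * t
  have hwu : w ⬝ᵥ u = -(sα⁻¹) * t := by
    rw [hu, dotProduct_smul, ht, smul_eq_mul]
  rw [hwu] at hz
  -- S-procedure bound
  have hQ : s ⬝ᵥ (∑ j, ρ j • Pm j) *ᵥ s ≤ ∑ j, ρ j := by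
    have hsum : (∑ j, ρ j • Pm j) *ᵥ s = ∑ j, ρ j • ((Pm j) *ᵥ s) := by
      funext k
      simp only [Matrix.mulVec, dotProduct, Finset.sum_apply, Matrix.sum_apply,
        Matrix.smul_apply, smul_eq_mul, Finset.sum_mul, Finset.mul_sum, Pi.smul_apply]
      rw [Finset.sum_comm]
      simp [mul_assoc]
    have : s ⬝ᵥ (∑ j, ρ j • Pm j) *ᵥ s = ∑ j, ρ j * (s ⬝ᵥ (Pm j) *ᵥ s) := by
      rw [hsum]
      simp only [dotProduct, Finset.sum_apply, Pi.smul_apply, smul_eq_mul,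
        Finset.mul_sum]
      rw [Finset.sum_comm]
      refine Finset.sum_congr rfl fun j _ => Finset.sum_congr rfl fun k _ => by ring
    rw [this]
    apply Finset.sum_le_sum
    intro j _
    calc ρ j * (s ⬝ᵥ (Pm j) *ᵥ s) ≤ ρ j * 1 := by
          exact mul_le_mul_of_nonneg_left (hs j) (hρ j)
      _ = ρ j := mul_one _
  have hsq : sα * sα = α := Real.mul_self_sqrt hα.le
  have h1 : sα⁻¹ * t ≤ sα := by linarith
  have h2 : t ≤ sα * sα := by
    have h3 := mul_le_mul_of_nonneg_left h1 hsα.le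
    rwa [← mul_assoc, mul_inv_cancel₀ hsα.ne', one_mul] at h3
  linarith
end
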